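/- (Discrete momentum conservation) Let τ: 𝔤 → G satisfy τ(ξ)τ(-ξ) = e and let Dτ_ξ be its left-trivialized differential. Suppose gₖ₊₁ = τ(hξₖ)·gₖ and μₖ₊₁ = (Dτ⁻¹_{-hξₖ})* (Dτ_{hξₖ})* μₖ. Then Ad*_{gₖ₊₁} μₖ₊₁ = Ad*_{gₖ} μₖ. -/

import Mathlib

/-- Discrete momentum conservation.  In a matrix Lie group realized inside a
Banach algebra `A`, let `τ : 𝔤 → G` satisfy `τ(ξ)τ(-ξ) = e` with Fréchet
derivative `Fτ` and (invertible) left-trivialized differential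
`Dτ_ξ(η) = τ(ξ)⁻¹ Fτ_ξ(η) = τ(-ξ) Fτ_ξ(η)`.  If
`gₖ₊₁ = τ(hξₖ)·gₖ` and `μₖ₊₁ = (Dτ⁻¹_{-hξₖ})* (Dτ_{hξₖ})* μₖ`
(i.e. `μₖ₊₁(v) = μₖ(Dτ_{hξₖ}(Dτ_{-hξₖ}⁻¹ v))`), then
`Ad*_{gₖ₊₁} μₖ₊₁ = Ad*_{gₖ} μₖ`, i.e.
`μₖ₊₁(gₖ₊₁ v gₖ₊₁⁻¹) = μₖ(gₖ v gₖ⁻¹)` for all `v`. -/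
theorem discrete_momentum_conservation
    {A : Type*} [NormedRing A] [NormedAlgebra ℝ A] [CompleteSpace A]
    (τ : A → A) (Fτ : A → A →L[ℝ] A) (D : A → (A ≃ₗ[ℝ] A))
    (hinv : ∀ ξ : A, τ ξ * τ (-ξ) = 1)
    (hinv' : ∀ ξ : A, τ (-ξ) * τ ξ = 1)
    (hF : ∀ ξ : A, HasFDerivAt τ (Fτ ξ) ξ)
    (hD : ∀ ξ η : A, D ξ η = τ (-ξ) * Fτ ξ η)
    (h : ℝ) (hh : 0 < h) (ξk : A) (gk gkInv : A)
    (hgk : gk * gkInv = 1) (hgk' : gkInv * gk = 1)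
    (μk μk1 : Module.Dual ℝ A)
    (hupdate : ∀ v : A, μk1 v = μk (D (h • ξk) ((D (-(h • ξk))).symm v))) :
    ∀ v : A,
      μk1 ((τ (h • ξk) * gk) * v * (gkInv * τ (-(h • ξk))))
        = μk (gk * v * gkInv) := by
  intro v
  set a := h • ξk with ha
  -- Key: Fτ a w * τ (-a) = τ a * Fτ (-a) w, by differentiating ξ ↦ τ ξ * τ (-ξ) = 1
  have key : ∀ w : A, Fτ a w * τ (-a) = τ a * Fτ (-a) w := by
    have h2 : HasFDerivAt (fun ξ : A => τ (-ξ)) ((Fτ (-a)).comp (-(ContinuousLinearMap.id ℝ A))) a := by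
      have := (hF (-a)).comp a ((hasFDerivAt_id a).neg)
      simpa [Function.comp_def] using this
    have hprod := (hF a).mul' h2
    have hconst : HasFDerivAt (fun ξ : A => τ ξ * τ (-ξ)) (0 : A →L[ℝ] A) a := by
      have : (fun ξ : A => τ ξ * τ (-ξ)) = fun _ => (1 : A) := funext fun ξ => hinv ξ
      rw [this]; exact hasFDerivAt_const 1 a
    have heq := hprod.unique hconst
    intro w
    have := congrArg (fun L : A →L[ℝ] A => L w) heq
    simp only [ContinuousLinearMap.add_apply, ContinuousLinearMap.smul_apply,
      ContinuousLinearMap.smulRight_apply, ContinuousLinearMap.comp_apply,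
      ContinuousLinearMap.neg_apply, ContinuousLinearMap.id_apply,
      ContinuousLinearMap.zero_apply, smul_eq_mul, map_neg] at this
    rw [mul_neg, neg_add_eq_zero] at this
    exact this.symm
  set u := gk * v * gkInv with hu
  set w := (D a).symm u with hw
  have hDaw : D a w = u := (D a).apply_symm_apply u
  have hFaw : Fτ a w = τ a * u := by
    have := hD a w
    rw [hDaw] at this
    calc Fτ a w = (τ a * τ (-a)) * Fτ a w := by rw [hinv, one_mul]
    _ = τ a * u := by rw [mul_assoc, ← this]
  have hDnaw : D (-a) w = τ a * u * τ (-a) := by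
    rw [hD (-a) w, neg_neg, ← key w, hFaw]
  have hsymm : (D (-a)).symm (τ a * u * τ (-a)) = w := by
    rw [← hDnaw]; exact (D (-a)).symm_apply_apply w
  have hassoc : (τ a * gk) * v * (gkInv * τ (-a)) = τ a * u * τ (-a) := by
    simp only [hu, mul_assoc]
  rw [hassoc, hupdate, hsymm, hDaw]
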